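/- Let X = (X^(1), X^(2)) with X^(1), X^(2) i.i.d. Bernoulli(1/2) (the DSBS with q = 1/2), and let Y ~ Uniform{1,2} be independent of X with f(X, Y) = X^(Y). Then the optimal single-letter region {(R_c, R_u) : ∃ p_{V|X}, R_c ≥ I(X; V|Y), R_u ≥ H(f(X,Y)|V,Y)} equals {(R_c, R_u) : R_c ≥ 0, R_u ≥ 0, R_c + 2 R_u ≥ 2}. -/

import Mathlib

open scoped BigOperators

namespace Caching

/-- A finitely supported probability mass function on the sample space `Ω`. -/
structure FinPMF (Ω : Type*) [Fintype Ω] where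
  p : Ω → ℝ
  nonneg : ∀ ω, 0 ≤ p ω
  sum_one : ∑ ω, p ω = 1

variable {Ω : Type*} [Fintype Ω]

/-- The probability that the random variable `X` takes the value `x`. -/
def prob {α : Type*} [DecidableEq α] (μ : FinPMF Ω) (X : Ω → α) (x : α) : ℝ :=
  ∑ ω, if X ω = x then μ.p ω else 0

/-- Shannon entropy (in bits) of a finite discrete random variable. -/
noncomputable def H {α : Type*} [Fintype α] [DecidableEq α] (μ : FinPMF Ω) (X : Ω → α) : ℝ :=
  -∑ x, prob μ X x * Real.logb 2 (prob μ X x)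

/-- Conditional entropy `H(X | Y)` (in bits). -/
noncomputable def condH {α β : Type*} [Fintype α] [DecidableEq α] [Fintype β] [DecidableEq β]
    (μ : FinPMF Ω) (X : Ω → α) (Y : Ω → β) : ℝ :=
  H μ (fun ω => (X ω, Y ω)) - H μ Y

/-- Mutual information `I(X; Y)` (in bits). -/
noncomputable def mutInfo {α β : Type*} [Fintype α] [DecidableEq α] [Fintype β] [DecidableEq β]
    (μ : FinPMF Ω) (X : Ω → α) (Y : Ω → β) : ℝ :=
  H μ X + H μ Y - H μ (fun ω => (X ω, Y ω))

/-- Conditional mutual information `I(X; Y | Z)` (in bits). -/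
noncomputable def condMutInfo {α β γ : Type*} [Fintype α] [DecidableEq α] [Fintype β]
    [DecidableEq β] [Fintype γ] [DecidableEq γ]
    (μ : FinPMF Ω) (X : Ω → α) (Y : Ω → β) (Z : Ω → γ) : ℝ :=
  condH μ X Z + condH μ Y Z - condH μ (fun ω => (X ω, Y ω)) Z

/-- `X` and `Y` are independent. -/
def Indep {α β : Type*} [DecidableEq α] [DecidableEq β]
    (μ : FinPMF Ω) (X : Ω → α) (Y : Ω → β) : Prop :=
  ∀ x y, prob μ (fun ω => (X ω, Y ω)) (x, y) = prob μ X x * prob μ Y y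

/-- `V — X — Y` form a Markov chain: `V` and `Y` are conditionally independent given `X`. -/
def MarkovChain {α β γ : Type*} [DecidableEq α] [DecidableEq β] [DecidableEq γ]
    (μ : FinPMF Ω) (V : Ω → γ) (X : Ω → α) (Y : Ω → β) : Prop :=
  ∀ v x y, prob μ (fun ω => (V ω, X ω, Y ω)) (v, x, y) * prob μ X x
    = prob μ (fun ω => (V ω, X ω)) (v, x) * prob μ (fun ω => (X ω, Y ω)) (x, y)


/-- The joint law on `V × X × Y` induced by a test channel `W = p_{V|X}` and a source pmf `p`. -/
noncomputable def inducedPMF {n : ℕ} {α β : Type*} [Fintype α] [Fintype β]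
    (p : α × β → ℝ) (hp0 : ∀ a, 0 ≤ p a) (hp1 : ∑ a, p a = 1)
    (W : Fin n → α → ℝ) (hW0 : ∀ v x, 0 ≤ W v x) (hW1 : ∀ x, ∑ v, W v x = 1) :
    FinPMF (Fin n × α × β) where
  p := fun ω => W ω.1 ω.2.1 * p ω.2
  nonneg := fun ω => mul_nonneg (hW0 _ _) (hp0 _)
  sum_one := by
    have h : ∑ ω : Fin n × α × β, W ω.1 ω.2.1 * p ω.2
        = ∑ a : α × β, (∑ v, W v a.1) * p a := by
      rw [Fintype.sum_prod_type, Finset.sum_comm]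
      simp [Finset.sum_mul]
    rw [h]
    simp only [hW1, one_mul]
    exact hp1

/-- The single-letter rate region for the single-user caching problem:
pairs `(R_c, R_u)` with `R_c ≥ I(X; V | Y)` and `R_u ≥ H(f(X,Y) | V, Y)` for some
test channel `p_{V|X}` over a finite alphabet (so that `V — X — Y` is a Markov chain). -/
noncomputable def cacheRegion {α β S : Type*} [Fintype α] [DecidableEq α]
    [Fintype β] [DecidableEq β] [Fintype S] [DecidableEq S]
    (p : α × β → ℝ) (hp0 : ∀ a, 0 ≤ p a) (hp1 : ∑ a, p a = 1)
    (f : α → β → S) : Set (ℝ × ℝ) :=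
  {R | ∃ (n : ℕ) (W : Fin n → α → ℝ) (hW0 : ∀ v x, 0 ≤ W v x) (hW1 : ∀ x, ∑ v, W v x = 1),
    R.1 ≥ condMutInfo (inducedPMF p hp0 hp1 W hW0 hW1)
            (fun ω => ω.2.1) (fun ω => ω.1) (fun ω => ω.2.2) ∧
    R.2 ≥ condH (inducedPMF p hp0 hp1 W hW0 hW1)
            (fun ω => f ω.2.1 ω.2.2) (fun ω => (ω.1, ω.2.2))}

/-- The DSBS source with crossover probability `q = 1/2`: `X = (X¹, X²)` with `X¹, X²`
i.i.d. uniform on `{0,1}`, and `Y` uniform on `{1,2}` independent of `X`. -/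
noncomputable def pDSBShalf : (Bool × Bool) × Fin 2 → ℝ := fun _ => 1 / 8

/-- The component-selection function `f(X, Y) = X^(Y)`. -/
def fSel : Bool × Bool → Fin 2 → Bool :=
  fun x y => if y = 0 then x.1 else x.2

section Basic
variable {Ω : Type*} [Fintype Ω] (μ : FinPMF Ω)

lemma prob_nonneg {α : Type*} [DecidableEq α] (X : Ω → α) (x : α) :
    0 ≤ prob μ X x := by
  apply Finset.sum_nonneg
  intro ω _
  split <;> simp [μ.nonneg]

lemma sum_prob {α : Type*} [Fintype α] [DecidableEq α] (X : Ω → α) :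
    ∑ x, prob μ X x = 1 := by
  unfold prob
  rw [Finset.sum_comm]
  simp [μ.sum_one]

lemma prob_fst_marg {α β : Type*} [Fintype β] [DecidableEq α] [DecidableEq β]
    (A : Ω → α) (B : Ω → β) (a : α) :
    ∑ b, prob μ (fun ω => (A ω, B ω)) (a, b) = prob μ A a := by
  unfold prob
  rw [Finset.sum_comm]
  apply Finset.sum_congr rfl
  intro ω _
  by_cases h : A ω = a
  · simp [h]
  · simp [h, Prod.ext_iff]

lemma prob_snd_marg {α β : Type*} [Fintype α] [DecidableEq α] [DecidableEq β]
    (A : Ω → α) (B : Ω → β) (b : β) :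
    ∑ a, prob μ (fun ω => (A ω, B ω)) (a, b) = prob μ B b := by
  unfold prob
  rw [Finset.sum_comm]
  apply Finset.sum_congr rfl
  intro ω _
  by_cases h : B ω = b
  · simp [h]
  · simp [h, Prod.ext_iff]

lemma prob_mid_marg {α β γ : Type*} [Fintype β] [DecidableEq α] [DecidableEq β] [DecidableEq γ]
    (A : Ω → α) (B : Ω → β) (C : Ω → γ) (a : α) (c : γ) :
    ∑ b, prob μ (fun ω => ((A ω, B ω), C ω)) ((a, b), c)
      = prob μ (fun ω => (A ω, C ω)) (a, c) := by
  unfold prob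
  rw [Finset.sum_comm]
  apply Finset.sum_congr rfl
  intro ω _
  by_cases hA : A ω = a
  · by_cases hC : C ω = c
    · simp [hA, hC, Prod.ext_iff]
    · simp [hA, hC, Prod.ext_iff]
  · simp [hA, Prod.ext_iff]

lemma prob_pair_le_snd {α β : Type*} [DecidableEq α] [DecidableEq β]
    (A : Ω → α) (B : Ω → β) (a : α) (b : β) :
    prob μ (fun ω => (A ω, B ω)) (a, b) ≤ prob μ B b := by
  apply Finset.sum_le_sum
  intro ω _
  by_cases h : B ω = b
  · by_cases h2 : A ω = a <;> simp [h, h2, Prod.ext_iff, μ.nonneg]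
  · simp [h, Prod.ext_iff]

end Basic
section Gibbs

/-- `t·log₂(t/c) = t·log₂ t − t·log₂ c` for `t ≥ 0`, `c > 0` (also at `t = 0`). -/
lemma mul_logb_div (t c : ℝ) (ht : 0 ≤ t) (hc : 0 < c) :
    t * Real.logb 2 (t / c) = t * Real.logb 2 t - t * Real.logb 2 c := by
  rcases eq_or_lt_of_le ht with h | h
  · simp [← h]
  · rw [Real.logb_div h.ne' hc.ne']; ring

lemma mul_logb_mul (s t : ℝ) (hs : 0 ≤ s) (ht : 0 ≤ t) :
    s * t * Real.logb 2 (s * t) = t * (s * Real.logb 2 s) + s * (t * Real.logb 2 t) := by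
  rcases eq_or_lt_of_le hs with h | h
  · simp [← h]
  rcases eq_or_lt_of_le ht with h2 | h2
  · simp [← h2]
  rw [Real.logb_mul h.ne' h2.ne']; ring

/-- Gibbs' inequality. -/
lemma gibbs {ι : Type*} [Fintype ι] (p q : ι → ℝ)
    (hp : ∀ i, 0 ≤ p i) (hq : ∀ i, 0 ≤ q i)
    (hpq : ∀ i, 0 < p i → 0 < q i)
    (hsum : ∑ i, q i ≤ ∑ i, p i) :
    ∑ i, p i * Real.logb 2 (q i) ≤ ∑ i, p i * Real.logb 2 (p i) := by
  have key : ∀ i, p i * Real.logb 2 (q i) - p i * Real.logb 2 (p i)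
      ≤ (q i - p i) / Real.log 2 := by
    intro i
    rcases eq_or_lt_of_le (hp i) with h | h
    · rw [← h]; simp [div_nonneg (hq i) (Real.log_nonneg one_le_two)]
    · have hqi := hpq i h
      rw [Real.logb, Real.logb]
      have hlog : p i * Real.log (q i) - p i * Real.log (p i) = p i * Real.log (q i / p i) := by
        rw [Real.log_div hqi.ne' h.ne']; ring
      calc p i * (Real.log (q i) / Real.log 2) - p i * (Real.log (p i) / Real.log 2)
          = (p i * Real.log (q i / p i)) / Real.log 2 := by rw [← hlog]; ring
        _ ≤ (q i - p i) / Real.log 2 := by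
            apply div_le_div_of_nonneg_right _ (by positivity)
            · calc p i * Real.log (q i / p i) ≤ p i * (q i / p i - 1) := by
                    apply mul_le_mul_of_nonneg_left (Real.log_le_sub_one_of_pos (by positivity)) h.le
                _ = q i - p i := by field_simp
  calc ∑ i, p i * Real.logb 2 (q i)
      ≤ ∑ i, (p i * Real.logb 2 (p i) + (q i - p i) / Real.log 2) := by
        apply Finset.sum_le_sum; intro i _; linarith [key i]
    _ = ∑ i, p i * Real.logb 2 (p i) + (∑ i, q i - ∑ i, p i) / Real.log 2 := by
        rw [Finset.sum_add_distrib]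
        congr 1
        rw [← Finset.sum_div, Finset.sum_sub_distrib]
    _ ≤ ∑ i, p i * Real.logb 2 (p i) := by
        have : (∑ i, q i - ∑ i, p i) / Real.log 2 ≤ 0 := by
          apply div_nonpos_of_nonpos_of_nonneg (by linarith) (Real.log_nonneg one_le_two)
        linarith

end Gibbs
section Ineq
variable {Ω : Type*} [Fintype Ω] (μ : FinPMF Ω)

/-- `H(Y) ≤ H(X, Y)`, i.e. conditional entropy is nonnegative. -/
lemma H_snd_le {α β : Type*} [Fintype α] [DecidableEq α] [Fintype β] [DecidableEq β]
    (X : Ω → α) (Y : Ω → β) :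
    H μ Y ≤ H μ (fun ω => (X ω, Y ω)) := by
  unfold H
  rw [neg_le_neg_iff]
  have hY : ∑ y, prob μ Y y * Real.logb 2 (prob μ Y y)
      = ∑ p : α × β, prob μ (fun ω => (X ω, Y ω)) p * Real.logb 2 (prob μ Y p.2) := by
    rw [Fintype.sum_prod_type_right]
    apply Finset.sum_congr rfl
    intro y _
    calc prob μ Y y * Real.logb 2 (prob μ Y y)
        = (∑ x, prob μ (fun ω => (X ω, Y ω)) (x, y)) * Real.logb 2 (prob μ Y y) := by
          rw [prob_snd_marg]
      _ = ∑ x, prob μ (fun ω => (X ω, Y ω)) (x, y) * Real.logb 2 (prob μ Y (x, y).2) := by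
          rw [Finset.sum_mul]
  rw [hY]
  apply Finset.sum_le_sum
  rintro ⟨a, b⟩ _
  rcases eq_or_lt_of_le (prob_nonneg μ (fun ω => (X ω, Y ω)) (a, b)) with h | h
  · simp [← h]
  · exact mul_le_mul_of_nonneg_left
      (Real.logb_le_logb_of_le one_lt_two h (prob_pair_le_snd μ X Y a b)) h.le

lemma condH_nonneg {α β : Type*} [Fintype α] [DecidableEq α] [Fintype β] [DecidableEq β]
    (X : Ω → α) (Y : Ω → β) : 0 ≤ condH μ X Y := by
  have := H_snd_le μ X Y
  unfold condH
  linarith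

lemma prob_inner_fst_marg {α β γ : Type*} [Fintype α] [DecidableEq α] [DecidableEq β]
    [DecidableEq γ] (A : Ω → α) (B : Ω → β) (C : Ω → γ) (b : β) (c : γ) :
    ∑ a, prob μ (fun ω => ((A ω, B ω), C ω)) ((a, b), c)
      = prob μ (fun ω => (B ω, C ω)) (b, c) := by
  unfold prob
  rw [Finset.sum_comm]
  apply Finset.sum_congr rfl
  intro ω _
  by_cases hB : B ω = b
  · by_cases hC : C ω = c
    · simp [hB, hC, Prod.ext_iff]
    · simp [hB, hC, Prod.ext_iff]
  · simp [hB, Prod.ext_iff]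

/-- Submodularity of entropy: `H(A,B,C) + H(C) ≤ H(A,C) + H(B,C)`. -/
lemma H_submod {α β γ : Type*} [Fintype α] [DecidableEq α] [Fintype β] [DecidableEq β]
    [Fintype γ] [DecidableEq γ] (A : Ω → α) (B : Ω → β) (C : Ω → γ) :
    H μ (fun ω => ((A ω, B ω), C ω)) + H μ C
      ≤ H μ (fun ω => (A ω, C ω)) + H μ (fun ω => (B ω, C ω)) := by
  classical
  set pJ : α × β × γ → ℝ := fun i => prob μ (fun ω => ((A ω, B ω), C ω)) ((i.1, i.2.1), i.2.2)
    with hpJ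
  set pAC : α → γ → ℝ := fun a c => prob μ (fun ω => (A ω, C ω)) (a, c) with hpAC
  set pBC : β → γ → ℝ := fun b c => prob μ (fun ω => (B ω, C ω)) (b, c) with hpBC
  set pC : γ → ℝ := fun c => prob μ C c with hpC
  set q : α × β × γ → ℝ := fun i =>
    if pC i.2.2 = 0 then 0 else pAC i.1 i.2.2 * pBC i.2.1 i.2.2 / pC i.2.2 with hq
  have hpJ0 : ∀ i, 0 ≤ pJ i := fun i => prob_nonneg _ _ _
  have hpAC0 : ∀ a c, 0 ≤ pAC a c := fun a c => prob_nonneg _ _ _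
  have hpBC0 : ∀ b c, 0 ≤ pBC b c := fun b c => prob_nonneg _ _ _
  have hpC0 : ∀ c, 0 ≤ pC c := fun c => prob_nonneg _ _ _
  have hq0 : ∀ i, 0 ≤ q i := by
    rintro ⟨a, b, c⟩
    simp only [hq]
    split
    · exact le_refl 0
    · exact div_nonneg (mul_nonneg (hpAC0 a c) (hpBC0 b c)) (hpC0 c)
  -- marginals
  have margA : ∀ a c, ∑ b, pJ (a, b, c) = pAC a c := fun a c => prob_mid_marg μ A B C a c
  have margB : ∀ b c, ∑ a, pJ (a, b, c) = pBC b c := fun b c => prob_inner_fst_marg μ A B C b c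
  have margC : ∀ c, ∑ a, ∑ b, pJ (a, b, c) = pC c := by
    intro c
    show ∑ a, ∑ b, pJ (a, b, c) = prob μ C c
    rw [← prob_snd_marg μ (fun ω => (A ω, B ω)) C c, Fintype.sum_prod_type]
  have hle_pAC : ∀ a b c, pJ (a, b, c) ≤ pAC a c := by
    intro a b c
    rw [← margA a c]
    exact Finset.single_le_sum (fun b' _ => hpJ0 (a, b', c)) (Finset.mem_univ b)
  have hle_pBC : ∀ a b c, pJ (a, b, c) ≤ pBC b c := by
    intro a b c
    rw [← margB b c]
    exact Finset.single_le_sum (fun a' _ => hpJ0 (a', b, c)) (Finset.mem_univ a)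
  have hle_pC : ∀ a b c, pJ (a, b, c) ≤ pC c := by
    intro a b c
    exact le_trans (hle_pAC a b c) (prob_pair_le_snd μ A C a c)
  have hpq : ∀ i, 0 < pJ i → 0 < q i := by
    rintro ⟨a, b, c⟩ h
    have hC : 0 < pC c := lt_of_lt_of_le h (hle_pC a b c)
    have hA : 0 < pAC a c := lt_of_lt_of_le h (hle_pAC a b c)
    have hB : 0 < pBC b c := lt_of_lt_of_le h (hle_pBC a b c)
    simp only [hq, hC.ne', if_false]
    positivity
  -- reordering helper
  have reorder : ∀ f : α × β × γ → ℝ, ∑ i, f i = ∑ c, ∑ a, ∑ b, f (a, b, c) := by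
    intro f
    rw [Fintype.sum_prod_type]
    have : ∀ a : α, ∑ i : β × γ, f (a, i.1, i.2) = ∑ c, ∑ b, f (a, b, c) := by
      intro a
      rw [Fintype.sum_prod_type, Finset.sum_comm]
    simp_rw [this]
    rw [Finset.sum_comm]
  have margAC : ∀ c, ∑ a, pAC a c = pC c := fun c => prob_snd_marg μ A C c
  have margBC : ∀ c, ∑ b, pBC b c = pC c := fun c => prob_snd_marg μ B C c
  have hsum : ∑ i, q i ≤ ∑ i, pJ i := by
    rw [reorder q, reorder pJ]
    apply Finset.sum_le_sum
    intro c _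
    rw [margC c]
    by_cases h : pC c = 0
    · simp [hq, h, hpC0 c]
    · have : ∑ a, ∑ b, q (a, b, c) = pC c := by
        simp only [hq, h, if_false, div_eq_mul_inv]
        calc ∑ a, ∑ b, pAC a c * pBC b c * (pC c)⁻¹
            = ∑ a, pAC a c * ((∑ b, pBC b c) * (pC c)⁻¹) := by
              apply Finset.sum_congr rfl; intro a _
              simp only [Finset.sum_mul, Finset.mul_sum]
              apply Finset.sum_congr rfl; intro b _; ring
          _ = (∑ a, pAC a c) * ((∑ b, pBC b c) * (pC c)⁻¹) := by
              rw [Finset.sum_mul, Finset.sum_mul]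
          _ = pC c := by
              rw [margAC, margBC]
              field_simp
      rw [this]
  have hgibbs := gibbs pJ q hpJ0 hq0 hpq hsum
  -- split the left side of Gibbs
  have hsplit : ∀ i : α × β × γ, pJ i * Real.logb 2 (q i)
      = pJ i * Real.logb 2 (pAC i.1 i.2.2) + pJ i * Real.logb 2 (pBC i.2.1 i.2.2)
        - pJ i * Real.logb 2 (pC i.2.2) := by
    rintro ⟨a, b, c⟩
    rcases eq_or_lt_of_le (hpJ0 (a, b, c)) with h | h
    · rw [← h]; ring
    · have hC : 0 < pC c := lt_of_lt_of_le h (hle_pC a b c)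
      have hA : 0 < pAC a c := lt_of_lt_of_le h (hle_pAC a b c)
      have hB : 0 < pBC b c := lt_of_lt_of_le h (hle_pBC a b c)
      simp only [hq, hC.ne', if_false]
      rw [Real.logb_div (by positivity) hC.ne', Real.logb_mul hA.ne' hB.ne']
      ring
  have hS1 : ∑ i : α × β × γ, pJ i * Real.logb 2 (pAC i.1 i.2.2)
      = -H μ (fun ω => (A ω, C ω)) := by
    rw [reorder]
    have h1 : ∀ c, ∑ a, ∑ b, pJ (a, b, c) * Real.logb 2 (pAC (a,b,c).1 (a,b,c).2.2)
        = ∑ a, pAC a c * Real.logb 2 (pAC a c) := by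
      intro c
      apply Finset.sum_congr rfl; intro a _
      show ∑ b, pJ (a, b, c) * Real.logb 2 (pAC a c) = _
      rw [← Finset.sum_mul, margA a c]
    simp_rw [h1]
    unfold H
    rw [neg_neg, Fintype.sum_prod_type, Finset.sum_comm]
  have hS2 : ∑ i : α × β × γ, pJ i * Real.logb 2 (pBC i.2.1 i.2.2)
      = -H μ (fun ω => (B ω, C ω)) := by
    rw [reorder]
    have h1 : ∀ c, ∑ a, ∑ b, pJ (a, b, c) * Real.logb 2 (pBC (a,b,c).2.1 (a,b,c).2.2)
        = ∑ b, pBC b c * Real.logb 2 (pBC b c) := by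
      intro c
      rw [Finset.sum_comm]
      apply Finset.sum_congr rfl; intro b _
      show ∑ a, pJ (a, b, c) * Real.logb 2 (pBC b c) = _
      rw [← Finset.sum_mul, margB b c]
    simp_rw [h1]
    unfold H
    rw [neg_neg, Fintype.sum_prod_type, Finset.sum_comm]
  have hS3 : ∑ i : α × β × γ, pJ i * Real.logb 2 (pC i.2.2) = -H μ C := by
    rw [reorder]
    have h1 : ∀ c, ∑ a, ∑ b, pJ (a, b, c) * Real.logb 2 (pC (a,b,c).2.2)
        = pC c * Real.logb 2 (pC c) := by
      intro c
      show ∑ a, ∑ b, pJ (a, b, c) * Real.logb 2 (pC c) = _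
      simp only [← Finset.sum_mul]
      rw [margC c]
    simp_rw [h1]
    unfold H
    rw [neg_neg]
  have hS0 : ∑ i : α × β × γ, pJ i * Real.logb 2 (pJ i)
      = -H μ (fun ω => ((A ω, B ω), C ω)) := by
    unfold H
    rw [neg_neg]
    simp only [Fintype.sum_prod_type]
    rfl
  rw [Finset.sum_congr rfl (fun i _ => hsplit i)] at hgibbs
  rw [Finset.sum_sub_distrib, Finset.sum_add_distrib, hS1, hS2, hS3, hS0] at hgibbs
  linarith

lemma condMutInfo_nonneg {α β γ : Type*} [Fintype α] [DecidableEq α] [Fintype β] [DecidableEq β]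
    [Fintype γ] [DecidableEq γ] (X : Ω → α) (V : Ω → β) (Z : Ω → γ) :
    0 ≤ condMutInfo μ X V Z := by
  have := H_submod μ X V Z
  unfold condMutInfo condH
  linarith

end Ineq
section Indep
variable {Ω : Type*} [Fintype Ω] (μ : FinPMF Ω)

/-- Entropy is additive for independent random variables. -/
lemma H_indep {α β : Type*} [Fintype α] [DecidableEq α] [Fintype β] [DecidableEq β]
    (A : Ω → α) (B : Ω → β) (h : Indep μ A B) :
    H μ (fun ω => (A ω, B ω)) = H μ A + H μ B := by
  unfold H
  have key : ∀ p : α × β,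
      prob μ (fun ω => (A ω, B ω)) p * Real.logb 2 (prob μ (fun ω => (A ω, B ω)) p)
      = prob μ B p.2 * (prob μ A p.1 * Real.logb 2 (prob μ A p.1))
        + prob μ A p.1 * (prob μ B p.2 * Real.logb 2 (prob μ B p.2)) := by
    rintro ⟨a, b⟩
    rw [h a b]
    exact mul_logb_mul _ _ (prob_nonneg μ A a) (prob_nonneg μ B b)
  rw [Finset.sum_congr rfl (fun p _ => key p), Finset.sum_add_distrib]
  have h1 : ∑ p : α × β, prob μ B p.2 * (prob μ A p.1 * Real.logb 2 (prob μ A p.1))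
      = ∑ a, prob μ A a * Real.logb 2 (prob μ A a) := by
    rw [Fintype.sum_prod_type]
    apply Finset.sum_congr rfl; intro a _
    show ∑ b, prob μ B b * (prob μ A a * Real.logb 2 (prob μ A a)) = _
    rw [← Finset.sum_mul, sum_prob, one_mul]
  have h2 : ∑ p : α × β, prob μ A p.1 * (prob μ B p.2 * Real.logb 2 (prob μ B p.2))
      = ∑ b, prob μ B b * Real.logb 2 (prob μ B b) := by
    rw [Fintype.sum_prod_type_right]
    apply Finset.sum_congr rfl; intro b _
    show ∑ a, prob μ A a * (prob μ B b * Real.logb 2 (prob μ B b)) = _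
    rw [← Finset.sum_mul, sum_prob, one_mul]
  rw [h1, h2]
  ring

end Indep

section LogbVals

lemma logb_half : Real.logb 2 (1/2 : ℝ) = -1 := by
  rw [show (1/2 : ℝ) = 2⁻¹ by norm_num, Real.logb_inv, Real.logb_self_eq_one] <;> norm_num

lemma logb_quarter : Real.logb 2 (1/4 : ℝ) = -2 := by
  rw [show (1/4 : ℝ) = (2^(2:ℕ) : ℝ)⁻¹ by norm_num, Real.logb_inv, Real.logb_pow,
    Real.logb_self_eq_one] <;> norm_num

lemma logb_eighth : Real.logb 2 (1/8 : ℝ) = -3 := by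
  rw [show (1/8 : ℝ) = (2^(3:ℕ) : ℝ)⁻¹ by norm_num, Real.logb_inv, Real.logb_pow,
    Real.logb_self_eq_one] <;> norm_num

lemma logb_two : Real.logb 2 (2 : ℝ) = 1 := by
  rw [Real.logb_self_eq_one] <;> norm_num

lemma logb_four : Real.logb 2 (4 : ℝ) = 2 := by
  rw [show (4 : ℝ) = 2^(2:ℕ) by norm_num, Real.logb_pow, Real.logb_self_eq_one] <;> norm_num

lemma logb_eight : Real.logb 2 (8 : ℝ) = 3 := by
  rw [show (8 : ℝ) = 2^(3:ℕ) by norm_num, Real.logb_pow, Real.logb_self_eq_one] <;> norm_num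

lemma half_logb (t : ℝ) (ht : 0 ≤ t) :
    (1/2 * t) * Real.logb 2 (1/2 * t) = 1/2 * (t * Real.logb 2 t) - 1/2 * t := by
  have := mul_logb_mul (1/2) t (by norm_num) ht
  rw [this, logb_half]
  ring

end LogbVals

section Converse
variable (hp0 : ∀ a, 0 ≤ pDSBShalf a) (hp1 : ∑ a, pDSBShalf a = 1)
variable {n : ℕ} (W : Fin n → Bool × Bool → ℝ) (hW0 : ∀ v x, 0 ≤ W v x)
  (hW1 : ∀ x, ∑ v, W v x = 1)

lemma pY : ∀ y : Fin 2,
    prob (inducedPMF pDSBShalf hp0 hp1 W hW0 hW1) (fun ω => ω.2.2) y = 1/2 := by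
  intro y
  unfold prob inducedPMF pDSBShalf
  rw [Fintype.sum_prod_type, Finset.sum_comm]
  simp [Fintype.sum_prod_type, Finset.sum_ite_irrel, Finset.sum_const_zero,
    Finset.sum_ite_eq, Finset.sum_ite_eq', ← Finset.sum_mul, hW1]
  norm_num

lemma pX : ∀ x : Bool × Bool,
    prob (inducedPMF pDSBShalf hp0 hp1 W hW0 hW1) (fun ω => ω.2.1) x = 1/4 := by
  rintro ⟨x1, x2⟩
  unfold prob inducedPMF pDSBShalf
  simp [Fintype.sum_prod_type, Prod.mk.injEq, ite_and, Finset.sum_ite_irrel,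
    Finset.sum_const_zero, Finset.sum_ite_eq, Finset.sum_ite_eq',
    ← Finset.sum_mul, hW1, Fin.sum_univ_two]
  have e : ∀ v' : Fin n, 2 * (W v' (x1, x2) * (8:ℝ)⁻¹) = W v' (x1, x2) * (4:ℝ)⁻¹ := by
    intro v'; ring
  rw [Finset.sum_congr rfl fun v' _ => e v', ← Finset.sum_mul, hW1]
  norm_num

lemma pXY : ∀ (x : Bool × Bool) (y : Fin 2),
    prob (inducedPMF pDSBShalf hp0 hp1 W hW0 hW1) (fun ω => (ω.2.1, ω.2.2)) (x, y)
      = 1/8 := by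
  rintro ⟨x1, x2⟩ y
  unfold prob inducedPMF pDSBShalf
  simp [Fintype.sum_prod_type, Prod.mk.injEq, ite_and, Finset.sum_ite_irrel,
    Finset.sum_const_zero, Finset.sum_ite_eq, Finset.sum_ite_eq', Fin.sum_univ_two]
  norm_num [← Finset.sum_mul, hW1 (x1, x2)]

lemma pXV : ∀ (x : Bool × Bool) (v : Fin n),
    prob (inducedPMF pDSBShalf hp0 hp1 W hW0 hW1) (fun ω => (ω.2.1, ω.1)) (x, v)
      = W v x * (1/4) := by
  rintro ⟨x1, x2⟩ v
  unfold prob inducedPMF pDSBShalf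
  simp [Fintype.sum_prod_type, Prod.mk.injEq, ite_and, Finset.sum_ite_irrel,
    Finset.sum_const_zero, Finset.sum_ite_eq, Finset.sum_ite_eq', Fin.sum_univ_two]
  ring

lemma pXVY : ∀ (x : Bool × Bool) (v : Fin n) (y : Fin 2),
    prob (inducedPMF pDSBShalf hp0 hp1 W hW0 hW1)
      (fun ω => ((ω.2.1, ω.1), ω.2.2)) ((x, v), y) = W v x * (1/8) := by
  rintro ⟨x1, x2⟩ v y
  unfold prob inducedPMF pDSBShalf
  simp [Fintype.sum_prod_type, Prod.mk.injEq, ite_and, Finset.sum_ite_irrel,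
    Finset.sum_const_zero, Finset.sum_ite_eq, Finset.sum_ite_eq']

lemma pV : ∀ v : Fin n,
    prob (inducedPMF pDSBShalf hp0 hp1 W hW0 hW1) (fun ω => ω.1) v
      = (∑ x, W v x) * (1/4) := by
  intro v
  unfold prob inducedPMF pDSBShalf
  simp [Fintype.sum_prod_type, Finset.sum_ite_irrel, Finset.sum_const_zero,
    Finset.sum_ite_eq, Finset.sum_ite_eq', Fin.sum_univ_two, Fintype.sum_bool]
  ring

lemma pVY : ∀ (v : Fin n) (y : Fin 2),
    prob (inducedPMF pDSBShalf hp0 hp1 W hW0 hW1) (fun ω => (ω.1, ω.2.2)) (v, y)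
      = (∑ x, W v x) * (1/8) := by
  intro v y
  unfold prob inducedPMF pDSBShalf
  simp [Fintype.sum_prod_type, Prod.mk.injEq, ite_and, Finset.sum_ite_irrel,
    Finset.sum_const_zero, Finset.sum_ite_eq, Finset.sum_ite_eq', Fintype.sum_bool]
  ring

lemma pX1V : ∀ (b : Bool) (v : Fin n),
    prob (inducedPMF pDSBShalf hp0 hp1 W hW0 hW1) (fun ω => (ω.2.1.1, ω.1)) (b, v)
      = (W v (b, false) + W v (b, true)) * (1/4) := by
  intro b v
  unfold prob inducedPMF pDSBShalf
  cases b <;>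
  simp [Fintype.sum_prod_type, Prod.mk.injEq, ite_and, Finset.sum_ite_irrel,
    Finset.sum_const_zero, Finset.sum_ite_eq, Finset.sum_ite_eq', Fin.sum_univ_two,
    Fintype.sum_bool, Finset.sum_add_distrib]
  all_goals ring

lemma pX2V : ∀ (b : Bool) (v : Fin n),
    prob (inducedPMF pDSBShalf hp0 hp1 W hW0 hW1) (fun ω => (ω.2.1.2, ω.1)) (b, v)
      = (W v (false, b) + W v (true, b)) * (1/4) := by
  intro b v
  unfold prob inducedPMF pDSBShalf
  cases b <;>
  simp [Fintype.sum_prod_type, Prod.mk.injEq, ite_and, Finset.sum_ite_irrel,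
    Finset.sum_const_zero, Finset.sum_ite_eq, Finset.sum_ite_eq', Fin.sum_univ_two,
    Fintype.sum_bool, Finset.sum_add_distrib]
  all_goals ring

lemma pFVY0 : ∀ (b : Bool) (v : Fin n),
    prob (inducedPMF pDSBShalf hp0 hp1 W hW0 hW1)
      (fun ω => (fSel ω.2.1 ω.2.2, (ω.1, ω.2.2))) (b, (v, 0))
      = 1/2 * prob (inducedPMF pDSBShalf hp0 hp1 W hW0 hW1)
          (fun ω => (ω.2.1.1, ω.1)) (b, v) := by
  intro b v
  rw [pX1V hp0 hp1 W hW0 hW1]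
  unfold prob inducedPMF pDSBShalf fSel
  cases b <;>
  simp [Fintype.sum_prod_type, Prod.mk.injEq, ite_and, Finset.sum_ite_irrel,
    Finset.sum_const_zero, Finset.sum_ite_eq, Finset.sum_ite_eq', Fin.sum_univ_two,
    Fintype.sum_bool, Finset.sum_add_distrib]
  all_goals ring

lemma pFVY1 : ∀ (b : Bool) (v : Fin n),
    prob (inducedPMF pDSBShalf hp0 hp1 W hW0 hW1)
      (fun ω => (fSel ω.2.1 ω.2.2, (ω.1, ω.2.2))) (b, (v, 1))
      = 1/2 * prob (inducedPMF pDSBShalf hp0 hp1 W hW0 hW1)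
          (fun ω => (ω.2.1.2, ω.1)) (b, v) := by
  intro b v
  rw [pX2V hp0 hp1 W hW0 hW1]
  unfold prob inducedPMF pDSBShalf fSel
  cases b <;>
  simp [Fintype.sum_prod_type, Prod.mk.injEq, ite_and, Finset.sum_ite_irrel,
    Finset.sum_const_zero, Finset.sum_ite_eq, Finset.sum_ite_eq', Fin.sum_univ_two,
    Fintype.sum_bool, Finset.sum_add_distrib]
  all_goals ring

/-- `I(X; V | Y) = 2 + H(V) - H(X, V)` for the induced joint law. -/
lemma cmi_eq :
    condMutInfo (inducedPMF pDSBShalf hp0 hp1 W hW0 hW1)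
        (fun ω => ω.2.1) (fun ω => ω.1) (fun ω => ω.2.2)
      = 2 + H (inducedPMF pDSBShalf hp0 hp1 W hW0 hW1) (fun ω => ω.1)
        - H (inducedPMF pDSBShalf hp0 hp1 W hW0 hW1) (fun ω => (ω.2.1, ω.1)) := by
  set μ := inducedPMF pDSBShalf hp0 hp1 W hW0 hW1 with hμ
  have hHY : H μ (fun ω => ω.2.2) = 1 := by
    unfold H
    simp [hμ, pY hp0 hp1 W hW0 hW1, Fin.sum_univ_two, logb_half, logb_two]
  have hHX : H μ (fun ω => ω.2.1) = 2 := by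
    unfold H
    simp [hμ, pX hp0 hp1 W hW0 hW1, Fintype.sum_prod_type, Fintype.sum_bool,
      logb_quarter, logb_four]
  have indXY : Indep μ (fun ω => ω.2.1) (fun ω => ω.2.2) := by
    intro x y
    rw [hμ, pXY hp0 hp1 W hW0 hW1, pX hp0 hp1 W hW0 hW1, pY hp0 hp1 W hW0 hW1]
    norm_num
  have indXVY : Indep μ (fun ω => (ω.2.1, ω.1)) (fun ω => ω.2.2) := by
    rintro ⟨x, v⟩ y
    rw [hμ, pXVY hp0 hp1 W hW0 hW1, pXV hp0 hp1 W hW0 hW1, pY hp0 hp1 W hW0 hW1]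
    ring
  have indVY : Indep μ (fun ω => ω.1) (fun ω => ω.2.2) := by
    intro v y
    rw [hμ, pVY hp0 hp1 W hW0 hW1, pV hp0 hp1 W hW0 hW1, pY hp0 hp1 W hW0 hW1]
    ring
  have hHXY : H μ (fun ω => (ω.2.1, ω.2.2)) = 3 := by
    rw [H_indep μ _ _ indXY, hHX, hHY]
    norm_num
  have hHXVY : H μ (fun ω => ((ω.2.1, ω.1), ω.2.2))
      = H μ (fun ω => (ω.2.1, ω.1)) + 1 := by
    rw [H_indep μ _ _ indXVY, hHY]
  have hHVY : H μ (fun ω => (ω.1, ω.2.2)) = H μ (fun ω => ω.1) + 1 := by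
    rw [H_indep μ _ _ indVY, hHY]
  unfold condMutInfo condH
  rw [hHXY, hHVY, hHXVY, hHY]
  ring

/-- `H(V, Y) = H(V) + 1` for the induced joint law. -/
lemma hVY_eq :
    H (inducedPMF pDSBShalf hp0 hp1 W hW0 hW1) (fun ω => (ω.1, ω.2.2))
      = H (inducedPMF pDSBShalf hp0 hp1 W hW0 hW1) (fun ω => ω.1) + 1 := by
  set μ := inducedPMF pDSBShalf hp0 hp1 W hW0 hW1 with hμ
  have hHY : H μ (fun ω => ω.2.2) = 1 := by
    unfold H
    simp [hμ, pY hp0 hp1 W hW0 hW1, Fin.sum_univ_two, logb_half, logb_two]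
  have indVY : Indep μ (fun ω => ω.1) (fun ω => ω.2.2) := by
    intro v y
    rw [hμ, pVY hp0 hp1 W hW0 hW1, pV hp0 hp1 W hW0 hW1, pY hp0 hp1 W hW0 hW1]
    ring
  rw [H_indep μ _ _ indVY, hHY]

/-- `H(f(X,Y) | V, Y) = H(X¹|V)/2 + H(X²|V)/2` for the induced joint law. -/
lemma chF_eq :
    condH (inducedPMF pDSBShalf hp0 hp1 W hW0 hW1)
        (fun ω => fSel ω.2.1 ω.2.2) (fun ω => (ω.1, ω.2.2))
      = 1/2 * H (inducedPMF pDSBShalf hp0 hp1 W hW0 hW1) (fun ω => (ω.2.1.1, ω.1))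
        + 1/2 * H (inducedPMF pDSBShalf hp0 hp1 W hW0 hW1) (fun ω => (ω.2.1.2, ω.1))
        - H (inducedPMF pDSBShalf hp0 hp1 W hW0 hW1) (fun ω => ω.1) := by
  set μ := inducedPMF pDSBShalf hp0 hp1 W hW0 hW1 with hμ
  have hHFVY : H μ (fun ω => (fSel ω.2.1 ω.2.2, (ω.1, ω.2.2)))
      = 1/2 * H μ (fun ω => (ω.2.1.1, ω.1)) + 1/2 * H μ (fun ω => (ω.2.1.2, ω.1)) + 1 := by
    have hg1sum : ∑ b : Bool, ∑ v : Fin n, prob μ (fun ω => (ω.2.1.1, ω.1)) (b, v) = 1 := by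
      rw [← Fintype.sum_prod_type]
      exact sum_prob μ _
    have hg2sum : ∑ b : Bool, ∑ v : Fin n, prob μ (fun ω => (ω.2.1.2, ω.1)) (b, v) = 1 := by
      rw [← Fintype.sum_prod_type]
      exact sum_prob μ _
    have hg1H : ∑ b : Bool, ∑ v : Fin n, prob μ (fun ω => (ω.2.1.1, ω.1)) (b, v)
        * Real.logb 2 (prob μ (fun ω => (ω.2.1.1, ω.1)) (b, v))
        = - H μ (fun ω => (ω.2.1.1, ω.1)) := by
      unfold H
      rw [neg_neg, Fintype.sum_prod_type]
    have hg2H : ∑ b : Bool, ∑ v : Fin n, prob μ (fun ω => (ω.2.1.2, ω.1)) (b, v)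
        * Real.logb 2 (prob μ (fun ω => (ω.2.1.2, ω.1)) (b, v))
        = - H μ (fun ω => (ω.2.1.2, ω.1)) := by
      unfold H
      rw [neg_neg, Fintype.sum_prod_type]
    unfold H
    rw [Fintype.sum_prod_type]
    simp only [Fintype.sum_prod_type, Fin.sum_univ_two]
    have e : ∀ (b : Bool) (v : Fin n),
        prob μ (fun ω => (fSel ω.2.1 ω.2.2, (ω.1, ω.2.2))) (b, (v, 0))
          * Real.logb 2 (prob μ (fun ω => (fSel ω.2.1 ω.2.2, (ω.1, ω.2.2))) (b, (v, 0)))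
        + prob μ (fun ω => (fSel ω.2.1 ω.2.2, (ω.1, ω.2.2))) (b, (v, 1))
          * Real.logb 2 (prob μ (fun ω => (fSel ω.2.1 ω.2.2, (ω.1, ω.2.2))) (b, (v, 1)))
        = (1/2 * (prob μ (fun ω => (ω.2.1.1, ω.1)) (b, v)
              * Real.logb 2 (prob μ (fun ω => (ω.2.1.1, ω.1)) (b, v)))
            - 1/2 * prob μ (fun ω => (ω.2.1.1, ω.1)) (b, v))
          + (1/2 * (prob μ (fun ω => (ω.2.1.2, ω.1)) (b, v)
              * Real.logb 2 (prob μ (fun ω => (ω.2.1.2, ω.1)) (b, v)))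
            - 1/2 * prob μ (fun ω => (ω.2.1.2, ω.1)) (b, v)) := by
      intro b v
      rw [hμ, pFVY0 hp0 hp1 W hW0 hW1, pFVY1 hp0 hp1 W hW0 hW1,
        half_logb _ (prob_nonneg _ _ _), half_logb _ (prob_nonneg _ _ _)]
    simp_rw [e]
    simp only [Finset.sum_add_distrib, Finset.sum_sub_distrib, ← Finset.mul_sum]
    rw [hg1sum, hg2sum, hg1H, hg2H]
    ring
  unfold condH
  rw [hHFVY, hVY_eq hp0 hp1 W hW0 hW1]
  ring

lemma converse_bound :
    2 ≤ condMutInfo (inducedPMF pDSBShalf hp0 hp1 W hW0 hW1)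
          (fun ω => ω.2.1) (fun ω => ω.1) (fun ω => ω.2.2)
        + 2 * condH (inducedPMF pDSBShalf hp0 hp1 W hW0 hW1)
            (fun ω => fSel ω.2.1 ω.2.2) (fun ω => (ω.1, ω.2.2)) := by
  set μ := inducedPMF pDSBShalf hp0 hp1 W hW0 hW1 with hμ
  have sub := H_submod μ (fun ω => ω.2.1.1) (fun ω => ω.2.1.2) (fun ω => ω.1)
  have heta : H μ (fun ω : Fin n × (Bool × Bool) × Fin 2 => ((ω.2.1.1, ω.2.1.2), ω.1))
      = H μ (fun ω => (ω.2.1, ω.1)) := rfl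
  rw [heta] at sub
  rw [cmi_eq hp0 hp1 W hW0 hW1, chF_eq hp0 hp1 W hW0 hW1]
  linarith

end Converse
section Achiev

/-- Encoding of `Bool × Bool` into `Fin 5` (the fifth symbol is the "erasure"). -/
def enc : Bool × Bool → Fin 5
  | (false, false) => 0
  | (false, true) => 1
  | (true, false) => 2
  | (true, true) => 3

/-- Time-sharing test channel: with probability `l` reveal `X`, else output the erasure `4`. -/
noncomputable def Wts (l : ℝ) : Fin 5 → Bool × Bool → ℝ :=
  fun v x => if v = enc x then l else if v = 4 then 1 - l else 0

lemma Wts_nonneg {l : ℝ} (h0 : 0 ≤ l) (h1 : l ≤ 1) : ∀ v x, 0 ≤ Wts l v x := by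
  intro v x
  unfold Wts
  split
  · exact h0
  split
  · linarith
  · exact le_refl 0

lemma Wts_sum (l : ℝ) : ∀ x, ∑ v, Wts l v x = 1 := by
  rintro ⟨x1, x2⟩
  cases x1 <;> cases x2 <;>
    simp [Wts, enc, Fin.sum_univ_five] <;> ring

lemma quarter_logb (t : ℝ) (ht : 0 ≤ t) :
    t * (4:ℝ)⁻¹ * Real.logb 2 (t * 4⁻¹) = (t * Real.logb 2 t) * 4⁻¹ - t * 2⁻¹ := by
  rw [mul_logb_mul t (4:ℝ)⁻¹ ht (by norm_num), Real.logb_inv, logb_four]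
  ring

lemma half_logb' (t : ℝ) (ht : 0 ≤ t) :
    t * (2:ℝ)⁻¹ * Real.logb 2 (t * 2⁻¹) = (t * Real.logb 2 t) * 2⁻¹ - t * 2⁻¹ := by
  rw [mul_logb_mul t (2:ℝ)⁻¹ ht (by norm_num), Real.logb_inv, logb_two]
  ring

variable (hp0 : ∀ a, 0 ≤ pDSBShalf a) (hp1 : ∑ a, pDSBShalf a = 1)
variable {l : ℝ} (hl0 : 0 ≤ l) (hl1 : l ≤ 1)

lemma HV_ts :
    H (inducedPMF pDSBShalf hp0 hp1 (Wts l) (Wts_nonneg hl0 hl1) (Wts_sum l))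
      (fun ω => ω.1)
    = -(l * Real.logb 2 l) - ((1-l) * Real.logb 2 (1-l)) + 2*l := by
  unfold H
  rw [Fin.sum_univ_five]
  simp only [pV hp0 hp1 (Wts l) (Wts_nonneg hl0 hl1) (Wts_sum l)]
  simp [Wts, enc, Fintype.sum_prod_type, Fintype.sum_bool, Fin.isValue]
  rw [show (1 - l + (1 - l) + (1 - l + (1 - l))) * (4:ℝ)⁻¹ = 1 - l by ring,
    quarter_logb l hl0]
  ring

lemma HXV_ts :
    H (inducedPMF pDSBShalf hp0 hp1 (Wts l) (Wts_nonneg hl0 hl1) (Wts_sum l))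
      (fun ω => (ω.2.1, ω.1))
    = -(l * Real.logb 2 l) - ((1-l) * Real.logb 2 (1-l)) + 2 := by
  unfold H
  simp only [Fintype.sum_prod_type, Fintype.sum_bool, Fin.sum_univ_five,
    pXV hp0 hp1 (Wts l) (Wts_nonneg hl0 hl1) (Wts_sum l)]
  simp [Wts, enc]
  rw [quarter_logb l hl0, quarter_logb (1-l) (by linarith)]
  ring

lemma HX1V_ts :
    H (inducedPMF pDSBShalf hp0 hp1 (Wts l) (Wts_nonneg hl0 hl1) (Wts_sum l))
      (fun ω => (ω.2.1.1, ω.1))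
    = -(l * Real.logb 2 l) - ((1-l) * Real.logb 2 (1-l)) + l + 1 := by
  unfold H
  simp only [Fintype.sum_prod_type, Fintype.sum_bool, Fin.sum_univ_five,
    pX1V hp0 hp1 (Wts l) (Wts_nonneg hl0 hl1) (Wts_sum l)]
  simp [Wts, enc]
  rw [show (1 - l + (1 - l)) * (4:ℝ)⁻¹ = (1-l) * 2⁻¹ by ring,
    half_logb' (1-l) (by linarith), quarter_logb l hl0]
  ring

lemma HX2V_ts :
    H (inducedPMF pDSBShalf hp0 hp1 (Wts l) (Wts_nonneg hl0 hl1) (Wts_sum l))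
      (fun ω => (ω.2.1.2, ω.1))
    = -(l * Real.logb 2 l) - ((1-l) * Real.logb 2 (1-l)) + l + 1 := by
  unfold H
  simp only [Fintype.sum_prod_type, Fintype.sum_bool, Fin.sum_univ_five,
    pX2V hp0 hp1 (Wts l) (Wts_nonneg hl0 hl1) (Wts_sum l)]
  simp [Wts, enc]
  rw [show (1 - l + (1 - l)) * (4:ℝ)⁻¹ = (1-l) * 2⁻¹ by ring,
    half_logb' (1-l) (by linarith), quarter_logb l hl0]
  ring

end Achiev
section Values
variable (hp0 : ∀ a, 0 ≤ pDSBShalf a) (hp1 : ∑ a, pDSBShalf a = 1)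
variable {l : ℝ} (hl0 : 0 ≤ l) (hl1 : l ≤ 1)

lemma cmi_ts :
    condMutInfo (inducedPMF pDSBShalf hp0 hp1 (Wts l) (Wts_nonneg hl0 hl1) (Wts_sum l))
      (fun ω => ω.2.1) (fun ω => ω.1) (fun ω => ω.2.2) = 2 * l := by
  rw [cmi_eq hp0 hp1 (Wts l) (Wts_nonneg hl0 hl1) (Wts_sum l),
    HV_ts hp0 hp1 hl0 hl1, HXV_ts hp0 hp1 hl0 hl1]
  ring

lemma chF_ts :
    condH (inducedPMF pDSBShalf hp0 hp1 (Wts l) (Wts_nonneg hl0 hl1) (Wts_sum l))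
      (fun ω => fSel ω.2.1 ω.2.2) (fun ω => (ω.1, ω.2.2)) = 1 - l := by
  rw [chF_eq hp0 hp1 (Wts l) (Wts_nonneg hl0 hl1) (Wts_sum l),
    HV_ts hp0 hp1 hl0 hl1, HX1V_ts hp0 hp1 hl0 hl1, HX2V_ts hp0 hp1 hl0 hl1]
  ring

end Values

/-- For the DSBS with `q = 1/2` (independent components), the optimal single-letter region is
`{(R_c, R_u) : R_c ≥ 0, R_u ≥ 0, R_c + 2 R_u ≥ 2}`. -/
theorem cacheRegion_dsbs_half
    (hp0 : ∀ a, 0 ≤ pDSBShalf a) (hp1 : ∑ a, pDSBShalf a = 1) :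
    cacheRegion pDSBShalf hp0 hp1 fSel
      = {R : ℝ × ℝ | 0 ≤ R.1 ∧ 0 ≤ R.2 ∧ 2 ≤ R.1 + 2 * R.2} := by
  ext R
  obtain ⟨Rc, Ru⟩ := R
  simp only [cacheRegion, Set.mem_setOf_eq]
  constructor
  · rintro ⟨n, W, hW0, hW1, h1, h2⟩
    have hnn1 := condMutInfo_nonneg (inducedPMF pDSBShalf hp0 hp1 W hW0 hW1)
      (fun ω => ω.2.1) (fun ω => ω.1) (fun ω => ω.2.2)
    have hnn2 := condH_nonneg (inducedPMF pDSBShalf hp0 hp1 W hW0 hW1)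
      (fun ω => fSel ω.2.1 ω.2.2) (fun ω => (ω.1, ω.2.2))
    have hcb := converse_bound hp0 hp1 W hW0 hW1
    refine ⟨by linarith [ge_iff_le.mp h1], by linarith [ge_iff_le.mp h2], ?_⟩
    have h1' := ge_iff_le.mp h1
    have h2' := ge_iff_le.mp h2
    linarith
  · rintro ⟨h1, h2, h3⟩
    have hl0 : (0:ℝ) ≤ min (Rc / 2) 1 := le_min (by linarith) zero_le_one
    have hl1 : min (Rc / 2) 1 ≤ 1 := min_le_right _ _
    refine ⟨5, Wts (min (Rc / 2) 1), Wts_nonneg hl0 hl1, Wts_sum _, ?_, ?_⟩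
    · rw [ge_iff_le, cmi_ts hp0 hp1 hl0 hl1]
      have := min_le_left (Rc / 2) 1
      linarith
    · rw [ge_iff_le, chF_ts hp0 hp1 hl0 hl1]
      rcases le_total (Rc / 2) 1 with h | h
      · rw [min_eq_left h]
        linarith
      · rw [min_eq_right h]
        linarith

end Caching
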